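/- Fix an integer N ≥ 3 and set θ_i = 2πi/N for i = 0, …, N−1. Let P = {i ∈ {0, …, N−1} : cos θ_i > 0}, let S_c = ∑_{i ∈ P} cos²θ_i, and suppose V₀ > 0, V_i = 0 for i ≠ 0, and 0 < δ < 1/S_c. Define m̄ = V₀/(1 − δ S_c) and the vector r̄ ∈ ℝ^N by r̄_0 = δ m̄ + V₀, r̄_j = δ m̄ cos θ_j for j ∈ P with j ≠ 0, and r̄_j = 0 for j ∉ P. Then m̄ > 0, ∑_j r̄_j cos θ_j = m̄, ∑_j r̄_j sin θ_j = 0, and r̄ is a stationary solution of the N-dimensional ring system: for every i, −r̄_i + F(δ ∑_{j=0}^{N−1} cos(θ_i − θ_j) r̄_j + V_i) = 0. -/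

import Mathlib

open Real

section Aux

lemma stmt13_negIdx (N : ℕ) (hN : 0 < N) (θ : Fin N → ℝ)
    (hθ : ∀ i : Fin N, θ i = 2 * π * i / N) (j : Fin N) :
    Real.cos (θ ⟨(N - j.val) % N, Nat.mod_lt _ hN⟩) = Real.cos (θ j) ∧
    Real.sin (θ ⟨(N - j.val) % N, Nat.mod_lt _ hN⟩) = - Real.sin (θ j) := by
  obtain ⟨v, hv⟩ := j
  by_cases hv0 : v = 0
  · subst hv0
    have h1 : (⟨(N - 0) % N, Nat.mod_lt _ hN⟩ : Fin N) = ⟨0, hN⟩ := by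
      simp [Nat.mod_self]
    have h2 : θ ⟨0, hN⟩ = 0 := by simp [hθ]
    rw [h1, h2]
    simp
  · have hlt : N - v < N := by omega
    have h1 : (⟨(N - v) % N, Nat.mod_lt _ hN⟩ : Fin N) = ⟨N - v, hlt⟩ := by
      simp [Nat.mod_eq_of_lt hlt]
    have h2 : θ ⟨N - v, hlt⟩ = 2 * π - θ ⟨v, hv⟩ := by
      rw [hθ, hθ]
      have hNne : (N : ℝ) ≠ 0 := by positivity
      have : ((N - v : ℕ) : ℝ) = (N : ℝ) - v := by
        push_cast [Nat.cast_sub hv.le]; ring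
      rw [this]
      field_simp
    rw [h1, h2]
    constructor
    · rw [Real.cos_sub]; simp
    · rw [Real.sin_sub]; simp

end Aux

set_option maxHeartbeats 1000000 in
open Classical in
/-- Existence of the bump stationary solution for the `N`-dimensional ring
system: with `P = {i : cos θ_i > 0}`, `S_c = ∑_{i∈P} cos²θ_i`,
`0 < δ < 1/S_c`, `m̄ = V₀/(1-δS_c)`, and `r̄` defined by `r̄_0 = δm̄ + V₀`,
`r̄_j = δm̄ cos θ_j` for `j ∈ P, j ≠ 0`, and `r̄_j = 0` otherwise, one has
`m̄ > 0`, `∑ r̄_j cos θ_j = m̄`, `∑ r̄_j sin θ_j = 0`, and `r̄` is a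
stationary solution. -/
theorem stmt13 (N : ℕ) (hN : 3 ≤ N) (δ V₀ : ℝ) (hV₀ : 0 < V₀)
    (θ : Fin N → ℝ) (hθ : ∀ i : Fin N, θ i = 2 * π * i / N)
    (V : Fin N → ℝ) (hV0 : V ⟨0, by omega⟩ = V₀)
    (hVi : ∀ i : Fin N, i ≠ ⟨0, by omega⟩ → V i = 0)
    (P : Finset (Fin N))
    (hP : P = Finset.univ.filter fun i => 0 < Real.cos (θ i))
    (Sc : ℝ) (hSc : Sc = ∑ i ∈ P, Real.cos (θ i) ^ 2)
    (hδ0 : 0 < δ) (hδ : δ < 1 / Sc)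
    (m : ℝ) (hm : m = V₀ / (1 - δ * Sc))
    (rb : Fin N → ℝ)
    (hrb0 : rb ⟨0, by omega⟩ = δ * m + V₀)
    (hrbP : ∀ j ∈ P, j ≠ (⟨0, by omega⟩ : Fin N) → rb j = δ * m * Real.cos (θ j))
    (hrbN : ∀ j : Fin N, j ∉ P → rb j = 0) :
    0 < m ∧
    (∑ j, rb j * Real.cos (θ j)) = m ∧
    (∑ j, rb j * Real.sin (θ j)) = 0 ∧
    ∀ i : Fin N,
      -rb i + max (δ * ∑ j, Real.cos (θ i - θ j) * rb j + V i) 0 = 0 := by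
  have hNpos : 0 < N := by omega
  set i0 : Fin N := ⟨0, by omega⟩ with hi0
  have hθ0 : θ i0 = 0 := by simp [hθ]
  have hcos0 : Real.cos (θ i0) = 1 := by rw [hθ0]; simp
  have hsin0 : Real.sin (θ i0) = 0 := by rw [hθ0]; simp
  have h0P : i0 ∈ P := by rw [hP]; simp [hcos0]
  -- Sc ≥ 1 > 0
  have hSc1 : 1 ≤ Sc := by
    rw [hSc]
    calc (1:ℝ) = Real.cos (θ i0) ^ 2 := by rw [hcos0]; norm_num
    _ ≤ ∑ i ∈ P, Real.cos (θ i) ^ 2 :=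
        Finset.single_le_sum (f := fun i => Real.cos (θ i) ^ 2)
          (fun i _ => sq_nonneg _) h0P
  have hScpos : 0 < Sc := by linarith
  have hδSc : δ * Sc < 1 := by
    have := (lt_div_iff₀ hScpos).mp hδ
    linarith
  have hmpos : 0 < m := by
    rw [hm]; exact div_pos hV₀ (by linarith)
  -- rb on P
  have hrbP' : ∀ j ∈ P, rb j = δ * m * Real.cos (θ j) + if j = i0 then V₀ else 0 := by
    intro j hj
    by_cases hji : j = i0
    · subst hji; rw [hrb0, hcos0]; simp
    · rw [hrbP j hj hji]; simp [hji]
  -- sum of cos·sin over P vanishes by the involution j ↦ -j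
  have hsinPcos : ∑ j ∈ P, Real.cos (θ j) * Real.sin (θ j) = 0 := by
    apply Finset.sum_involution
      (g := fun j _ => (⟨(N - j.val) % N, Nat.mod_lt _ hNpos⟩ : Fin N))
    · intro j hj
      obtain ⟨hc, hs⟩ := stmt13_negIdx N hNpos θ hθ j
      rw [hc, hs]; ring
    · intro j hj hne heq
      obtain ⟨hc, hs⟩ := stmt13_negIdx N hNpos θ hθ j
      rw [heq] at hs
      apply hne
      have : Real.sin (θ j) = 0 := by linarith
      rw [this]; ring
    · intro j hj
      obtain ⟨hc, hs⟩ := stmt13_negIdx N hNpos θ hθ j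
      rw [hP] at hj ⊢
      simp only [Finset.mem_filter, Finset.mem_univ, true_and] at hj ⊢
      rw [hc]; exact hj
    · intro j hj
      obtain ⟨v, hv⟩ := j
      ext
      simp only
      rcases Nat.eq_zero_or_pos v with h0 | h0
      · subst h0; simp [Nat.mod_self]
      · have h1 : (N - v) % N = N - v := Nat.mod_eq_of_lt (by omega)
        rw [h1]
        have h2 : (N - (N - v)) % N = v := by
          rw [Nat.sub_sub_self hv.le]; exact Nat.mod_eq_of_lt hv
        exact h2
  -- reduce sums over univ to sums over P
  have hsub : ∀ f : Fin N → ℝ, (∑ j, rb j * f j) = ∑ j ∈ P, rb j * f j := by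
    intro f
    rw [Finset.sum_subset P.subset_univ]
    intro j _ hjP
    rw [hrbN j hjP]; ring
  have key : ∀ f : Fin N → ℝ,
      (∑ j, rb j * f j) = δ * m * (∑ j ∈ P, Real.cos (θ j) * f j) + V₀ * f i0 := by
    intro f
    rw [hsub]
    have step : ∀ j ∈ P, rb j * f j
        = δ * m * (Real.cos (θ j) * f j) + (if j = i0 then V₀ * f j else 0) := by
      intro j hj
      rw [hrbP' j hj]
      by_cases hji : j = i0 <;> simp [hji] <;> ring
    rw [Finset.sum_congr rfl step, Finset.sum_add_distrib, ← Finset.mul_sum,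
      Finset.sum_ite_eq' P i0 (fun j => V₀ * f j), if_pos h0P]
  have hmV : m * (1 - δ * Sc) = V₀ := by
    rw [hm, div_mul_cancel₀ _ (ne_of_gt (by linarith : (0:ℝ) < 1 - δ * Sc))]
  have hcos_sum : (∑ j, rb j * Real.cos (θ j)) = m := by
    have := key (fun j => Real.cos (θ j))
    rw [this, hcos0]
    have hsq : (∑ j ∈ P, Real.cos (θ j) * Real.cos (θ j)) = Sc := by
      rw [hSc]; exact Finset.sum_congr rfl (fun j _ => by ring)
    rw [hsq]
    nlinarith [hmV]
  have hsin_sum : (∑ j, rb j * Real.sin (θ j)) = 0 := by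
    have := key (fun j => Real.sin (θ j))
    rw [this, hsin0, hsinPcos]
    ring
  refine ⟨hmpos, hcos_sum, hsin_sum, ?_⟩
  intro i
  have hinner : (∑ j, Real.cos (θ i - θ j) * rb j) = m * Real.cos (θ i) := by
    have expand : ∀ j : Fin N, Real.cos (θ i - θ j) * rb j
        = Real.cos (θ i) * (rb j * Real.cos (θ j))
          + Real.sin (θ i) * (rb j * Real.sin (θ j)) := by
      intro j
      rw [Real.cos_sub]
      ring
    rw [Finset.sum_congr rfl (fun j _ => expand j), Finset.sum_add_distrib,
      ← Finset.mul_sum, ← Finset.mul_sum, hcos_sum, hsin_sum]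
    ring
  rw [hinner]
  by_cases hiP : i ∈ P
  · have hcpos : 0 < Real.cos (θ i) := by
      rw [hP] at hiP
      simpa using hiP
    by_cases hii : i = i0
    · subst hii
      rw [hrb0, hV0, hcos0]
      rw [max_eq_left (by nlinarith)]
      ring
    · rw [hrbP i hiP hii, hVi i hii]
      rw [max_eq_left (by nlinarith [mul_pos hδ0 (mul_pos hmpos hcpos)])]
      ring
  · have hcnp : Real.cos (θ i) ≤ 0 := by
      rw [hP] at hiP
      simp only [Finset.mem_filter, Finset.mem_univ, true_and, not_lt] at hiP
      exact hiP
    have hii : i ≠ i0 := fun h => hiP (h ▸ h0P)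
    rw [hrbN i hiP, hVi i hii]
    have hle : δ * (m * Real.cos (θ i)) ≤ 0 :=
      mul_nonpos_of_nonneg_of_nonpos hδ0.le
        (mul_nonpos_of_nonneg_of_nonpos hmpos.le hcnp)
    rw [max_eq_right (by linarith)]
    ring
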